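/- arXiv:2209.07969 — 2 statements merged into one kernel-verified Lean document; each statement's English description precedes it below -/
import Mathlib

section
/- Fix reals μ > 0, k > 0, η > 0, d and Δd, set g(d) := (1−d)² + η, and let ε, Δε be symmetric real 3×3 matrices with tr ε > 0. Define Δσ := g(d)[2μ Δε^dev + k (tr Δε) I] − 2(1−d)[2μ ε^dev + k (tr ε) I] Δd. If tr Δσ = 0, Δσ · ε^dev = 0 and Δσ · Δε = 0, then Δε^dev · Δε^dev = 4 ((1−d)²/g(d)²) (ε^dev · ε^dev) (Δd)². -/
open Matrix

/-- Deviatoric part of a 3×3 real matrix. -/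
noncomputable def dev (A : Matrix (Fin 3) (Fin 3) ℝ) : Matrix (Fin 3) (Fin 3) ℝ :=
  A - (A.trace / 3) • (1 : Matrix (Fin 3) (Fin 3) ℝ)

/-- Frobenius inner product of 3×3 real matrices. -/
noncomputable def frob (A B : Matrix (Fin 3) (Fin 3) ℝ) : ℝ := (Aᵀ * B).trace

lemma trace_dev (A : Matrix (Fin 3) (Fin 3) ℝ) : (dev A).trace = 0 := by
  simp [dev, Matrix.trace_sub, Matrix.trace_smul, Matrix.trace_one]

lemma frob_symm (A B : Matrix (Fin 3) (Fin 3) ℝ) :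
    frob A B = frob B A := by
  unfold frob
  conv_lhs => rw [← Matrix.trace_transpose, Matrix.transpose_mul, Matrix.transpose_transpose]

lemma dev_isSymm {A : Matrix (Fin 3) (Fin 3) ℝ} (hA : A.IsSymm) : (dev A).IsSymm := by
  unfold dev Matrix.IsSymm
  rw [Matrix.transpose_sub, Matrix.transpose_smul, Matrix.transpose_one, hA]

lemma frob_dev_right (A B : Matrix (Fin 3) (Fin 3) ℝ) :
    frob A (dev B) = frob A B - B.trace / 3 * A.trace := by
  simp only [frob, dev, Matrix.mul_sub, Matrix.mul_smul, Matrix.mul_one, Matrix.trace_sub,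
    Matrix.trace_smul, Matrix.trace_transpose, smul_eq_mul]
  try ring

set_option maxHeartbeats 1000000 in
theorem fixed_stress_deviatoric_increment_norm
    (μ k η d Δd : ℝ) (hμ : 0 < μ) (hk : 0 < k) (hη : 0 < η)
    (ε Δε : Matrix (Fin 3) (Fin 3) ℝ) (hε : ε.IsSymm) (hΔε : Δε.IsSymm)
    (htr : 0 < ε.trace)
    (Δσ : Matrix (Fin 3) (Fin 3) ℝ)
    (hΔσ : Δσ = ((1 - d) ^ 2 + η) •
        ((2 * μ) • dev Δε + (k * Δε.trace) • (1 : Matrix (Fin 3) (Fin 3) ℝ))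
      - (2 * (1 - d) * Δd) •
        ((2 * μ) • dev ε + (k * ε.trace) • (1 : Matrix (Fin 3) (Fin 3) ℝ)))
    (h0 : Δσ.trace = 0) (h1 : frob Δσ (dev ε) = 0) (h2 : frob Δσ Δε = 0) :
    frob (dev Δε) (dev Δε)
      = 4 * ((1 - d) ^ 2 / ((1 - d) ^ 2 + η) ^ 2) * frob (dev ε) (dev ε) * Δd ^ 2 := by
  set g : ℝ := (1 - d) ^ 2 + η with hg
  set c : ℝ := 2 * (1 - d) * Δd with hc
  set t : ℝ := ε.trace with ht
  set s : ℝ := Δε.trace with hs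
  set P : ℝ := frob (dev ε) (dev ε) with hP
  set X : ℝ := frob (dev ε) (dev Δε) with hX
  set Y : ℝ := frob (dev Δε) (dev Δε) with hY
  have hg0 : g ≠ 0 := by positivity
  -- general expansion of frob Δσ B
  have key : ∀ B : Matrix (Fin 3) (Fin 3) ℝ,
      frob Δσ B = g * (2 * μ * frob (dev Δε) B + k * s * B.trace)
        - c * (2 * μ * frob (dev ε) B + k * t * B.trace) := by
    intro B
    rw [hΔσ]
    simp only [frob, Matrix.transpose_sub, Matrix.transpose_smul, Matrix.transpose_add,
      Matrix.transpose_one, Matrix.sub_mul, Matrix.add_mul, smul_mul_assoc,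
      Matrix.one_mul, Matrix.trace_sub, Matrix.trace_add, Matrix.trace_smul, smul_eq_mul]
    try ring
  -- equation from h0
  have e0 : g * (k * s * 3) - c * (k * t * 3) = 0 := by
    have h := h0
    rw [hΔσ] at h
    simp only [Matrix.trace_sub, Matrix.trace_smul, Matrix.trace_add, smul_eq_mul,
      trace_dev, Matrix.trace_one, Fintype.card_fin] at h
    push_cast at h
    linarith
  -- equation from h1
  have e1 : g * (2 * μ * X) - c * (2 * μ * P) = 0 := by
    have h := key (dev ε)
    rw [h1, trace_dev] at h
    rw [frob_symm (dev Δε) (dev ε)] at h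
    linarith
  -- equation from h2
  have e2 : g * (2 * μ * Y + k * s * s) - c * (2 * μ * X + k * t * s) = 0 := by
    have h := key Δε
    rw [h2] at h
    have hA : frob (dev Δε) Δε = Y := by
      have h' := frob_dev_right (dev Δε) Δε
      rw [trace_dev] at h'
      rw [hY, h']; ring
    have hB : frob (dev ε) Δε = X := by
      have h' := frob_dev_right (dev ε) Δε
      rw [trace_dev] at h'
      rw [hX, h']; ring
    rw [hA, hB] at h
    linarith
  -- scalar algebra
  have egs : g * s - c * t = 0 := by
    have h3 : k * 3 * (g * s - c * t) = 0 := by linear_combination e0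
    rcases mul_eq_zero.mp h3 with h | h
    · exfalso; nlinarith
    · exact h
  have eY : g * Y - c * X = 0 := by
    have h3 : 2 * μ * (g * Y - c * X) = 0 := by linear_combination e2 - k * s * egs
    rcases mul_eq_zero.mp h3 with h | h
    · exfalso; nlinarith
    · exact h
  have eX : g * X - c * P = 0 := by
    have h3 : 2 * μ * (g * X - c * P) = 0 := by linear_combination e1
    rcases mul_eq_zero.mp h3 with h | h
    · exfalso; nlinarith
    · exact h
  have final : g ^ 2 * Y = c ^ 2 * P := by linear_combination g * eY + c * eX
  rw [hc] at final
  field_simp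
  linear_combination final
end

section
/- Fix reals μ > 0, k > 0, η > 0, and d, Δd with 0 ≤ d ≤ 1 and Δd ≥ 0, set g(d) := (1−d)² + η, and let ε, Δε be symmetric real 3×3 matrices with tr ε > 0. Define Δσ := g(d)[2μ Δε^dev + k (tr Δε) I] − 2(1−d)[2μ ε^dev + k (tr ε) I] Δd, and assume tr Δσ = 0. Then tr(ε + Δε) ≥ 0, and the updated positive trace satisfies ⟨tr(ε + Δε)⟩₊ = ⟨tr ε⟩₊ + (2(1−d)/g(d)) ⟨tr ε⟩₊ Δd. -/
open Matrix

theorem fixed_stress_updated_positive_trace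
    (μ k η d Δd : ℝ) (hμ : 0 < μ) (hk : 0 < k) (hη : 0 < η)
    (hd0 : 0 ≤ d) (hd1 : d ≤ 1) (hΔd : 0 ≤ Δd)
    (ε Δε : Matrix (Fin 3) (Fin 3) ℝ) (hε : ε.IsSymm) (hΔε : Δε.IsSymm)
    (htr : 0 < ε.trace)
    (Δσ : Matrix (Fin 3) (Fin 3) ℝ)
    (hΔσ : Δσ = ((1 - d) ^ 2 + η) •
        ((2 * μ) • dev Δε + (k * Δε.trace) • (1 : Matrix (Fin 3) (Fin 3) ℝ))
      - (2 * (1 - d) * Δd) •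
        ((2 * μ) • dev ε + (k * ε.trace) • (1 : Matrix (Fin 3) (Fin 3) ℝ)))
    (h0 : Δσ.trace = 0) :
    0 ≤ (ε + Δε).trace ∧
      max (ε + Δε).trace 0
        = max ε.trace 0 + 2 * (1 - d) / ((1 - d) ^ 2 + η) * max ε.trace 0 * Δd := by
  have hdev : ∀ A : Matrix (Fin 3) (Fin 3) ℝ, (dev A).trace = 0 := by
    intro A
    simp [dev, Matrix.trace_sub, Matrix.trace_smul, Matrix.trace_one]
  have hg : 0 < (1 - d) ^ 2 + η := by positivity
  rw [hΔσ] at h0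
  simp only [Matrix.trace_sub, Matrix.trace_smul, Matrix.trace_add, hdev,
    Matrix.trace_one, smul_eq_mul] at h0
  have hcard : ((Fintype.card (Fin 3) : ℝ)) = 3 := by norm_num
  rw [hcard] at h0
  have hΔtr : Δε.trace = 2 * (1 - d) / ((1 - d) ^ 2 + η) * ε.trace * Δd := by
    field_simp at h0 ⊢
    nlinarith [h0, hk.ne', hg.ne']
  have h1 : (ε + Δε).trace = ε.trace + Δε.trace := Matrix.trace_add ε Δε
  have hnn : 0 ≤ (ε + Δε).trace := by
    rw [h1, hΔtr]
    have : 0 ≤ 2 * (1 - d) / ((1 - d) ^ 2 + η) * ε.trace * Δd := by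
      apply mul_nonneg
      apply mul_nonneg
      · apply div_nonneg <;> nlinarith
      · linarith
      · exact hΔd
    linarith
  refine ⟨hnn, ?_⟩
  rw [max_eq_left hnn, max_eq_left htr.le, h1, hΔtr]
end
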